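/- Fix w, v ∈ Sₙ, let v ↦ v' be the greedy operation associated to w, and let a ∈ ℝⁿ satisfy a_{v(1)} < a_{v(2)} < ⋯ < a_{v(n)}. Then for every 1 ≤ d ≤ n: (i) the increasing rearrangement of {v'(1),…,v'(d)} is componentwise at most the increasing rearrangement of {w(1),…,w(d)}, and (ii) for every d-element subset S ⊆ {1,…,n} whose increasing enumeration is componentwise at most the increasing rearrangement of {w(1),…,w(d)}, one has Σ_{k=1}^{d} a_{v'(k)} ≤ Σ_{s∈S} a_s. -/

import Mathlib

namespace SchubertToric

open Equiv

/-- The number of inversions (= the length `ℓ`) of a permutation. -/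
def invCount {n : ℕ} (w : Equiv.Perm (Fin n)) : ℕ :=
  ((Finset.univ : Finset (Fin n × Fin n)).filter fun p => p.1 < p.2 ∧ w p.2 < w p.1).card

/-- `initSeg w d` is the set `{w(1), …, w(d)}` (0-indexed: images of the first `d` indices). -/
def initSeg {n : ℕ} (w : Equiv.Perm (Fin n)) (d : ℕ) : Finset (Fin n) :=
  (Finset.univ.filter fun i : Fin n => (i : ℕ) < d).image w

/-- `domLE S T`: the increasing rearrangement of `S` is componentwise ≤ that of `T`. -/
def domLE {n : ℕ} (S T : Finset (Fin n)) : Prop :=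
  List.Forall₂ (· ≤ ·) (S.sort (· ≤ ·)) (T.sort (· ≤ ·))

/-- Bruhat order on `
Sₙ`, via the tableau criterion. -/
def bruhatLE {n : ℕ} (v w : Equiv.Perm (Fin n)) : Prop :=
  ∀ d : ℕ, domLE (initSeg v d) (initSeg w d)

/-- `GreedyRel w v vp` says that `vp = v'`, the result of the greedy operation associated
to `w`: there is a sequence of indices `idx 0, idx 1, …`, each chosen as the *least* index
not previously chosen such that the increasing rearrangement of the previously chosen values
together with the new value is componentwise at most `{w(1),…,w(d)}`, and `vp d = v (idx d)`. -/
def GreedyRel {n : ℕ} (w v vp : Equiv.Perm (Fin n)) : Prop :=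
  ∃ idx : Fin n → Fin n,
    (∀ d : Fin n, vp d = v (idx d)) ∧
    ∀ d : Fin n,
      IsLeast {i : Fin n |
        (∀ e : Fin n, e < d → idx e ≠ i) ∧
        domLE (insert (v i)
            ((Finset.univ.filter fun e : Fin n => e < d).image fun e => v (idx e)))
          (initSeg w ((d : ℕ) + 1))}
        (idx d)

/-- Right weak order: `rightWeakLE u v` iff `v = u·s_{i₁}⋯s_{i_k}` with
`ℓ(u·s_{i₁}⋯s_{i_j}) = ℓ(u) + j` for all `0 ≤ j ≤ k`. -/
def rightWeakLE {n : ℕ} (u v : Equiv.Perm (Fin n)) : Prop :=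
  ∃ L : List (Equiv.Perm (Fin n)),
    (∀ s ∈ L, ∃ (i : Fin n) (h : (i : ℕ) + 1 < n), s = Equiv.swap i ⟨(i : ℕ) + 1, h⟩) ∧
    v = u * L.prod ∧
    ∀ k ≤ L.length, invCount (u * (L.take k).prod) = invCount u + k

/-- `Ref(w) = {(w(i),w(j)) : i < j, ℓ(w) − ℓ(t_{w(i),w(j)}·w) = 1}`. -/
def RefSet {n : ℕ} (w : Equiv.Perm (Fin n)) : Set (Fin n × Fin n) :=
  {p | ∃ i j : Fin n, i < j ∧ p = (w i, w j) ∧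
    invCount (Equiv.swap (w i) (w j) * w) + 1 = invCount w}

/-- The (undirected) graph `Γ_w` on `Fin n` whose edges are the pairs in `Ref(w)`. -/
def refGraph {n : ℕ} (w : Equiv.Perm (Fin n)) : SimpleGraph (Fin n) :=
  SimpleGraph.fromRel fun a b => (a, b) ∈ RefSet w

/-- The vertices of `Γ_w`: the integers occurring in pairs of `Ref(w)`. -/
def refVerts {n : ℕ} (w : Equiv.Perm (Fin n)) : Set (Fin n) :=
  {a | ∃ b, (a, b) ∈ RefSet w ∨ (b, a) ∈ RefSet w}

/-- The cone `C(v) = {x ∈ ℝⁿ : x_{v(1)} ≤ x_{v(2)} ≤ ⋯ ≤ x_{v(n)}}`. -/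
def coneC {n : ℕ} (v : Equiv.Perm (Fin n)) : Set (Fin n → ℝ) :=
  {x | ∀ i j : Fin n, i ≤ j → x (v i) ≤ x (v j)}

/-- `Ẽ_w(u) = {(u(i),u(j)) : i < j, t_{u(i),u(j)}·u ≤ w, |ℓ(u) − ℓ(t_{u(i),u(j)}·u)| = 1}`. -/
def Etil {n : ℕ} (w u : Equiv.Perm (Fin n)) : Set (Fin n × Fin n) :=
  {p | ∃ i j : Fin n, i < j ∧ p = (u i, u j) ∧
    bruhatLE (Equiv.swap (u i) (u j) * u) w ∧
    (invCount (Equiv.swap (u i) (u j) * u) + 1 = invCount u ∨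
      invCount u + 1 = invCount (Equiv.swap (u i) (u j) * u))}

/-- An element `p = (a,b)` of `Ẽ_w(u)` is decomposable if it is a sum (under
`(a,b)+(b,c) = (a,c)`) of two or more other elements of `Ẽ_w(u)`. -/
def Decomposable {n : ℕ} (w u : Equiv.Perm (Fin n)) (p : Fin n × Fin n) : Prop :=
  ∃ (m : ℕ) (c : ℕ → Fin n), 2 ≤ m ∧ c 0 = p.1 ∧ c m = p.2 ∧
    ∀ i < m, (c i, c (i + 1)) ∈ Etil w u ∧ (c i, c (i + 1)) ≠ p

/-- `E_w(u)`: the indecomposable elements of `Ẽ_w(u)`. -/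
def Ew {n : ℕ} (w u : Equiv.Perm (Fin n)) : Set (Fin n × Fin n) :=
  {p | p ∈ Etil w u ∧ ¬ Decomposable w u p}

/-- The longest element `w₀ = n(n−1)⋯21` of `Sₙ`. -/
def w0 {n : ℕ} : Equiv.Perm (Fin n) :=
  Function.Involutive.toPerm Fin.rev Fin.rev_rev


section Aux
open Finset

variable {n : ℕ}

private lemma forall₂_countP' {L M : List (Fin n)} (h : List.Forall₂ (· ≤ ·) L M) (m : Fin n) :
    M.countP (fun x => x ≤ m) ≤ L.countP (fun x => x ≤ m) := by
  induction h with
  | nil => simp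
  | @cons a b L' M' hab _ ih =>
    simp only [List.countP_cons]
    by_cases hb : b ≤ m
    · have ha : a ≤ m := le_trans hab hb
      simp only [ha, hb, decide_true, if_true]
      omega
    · simp only [hb, decide_false, Bool.false_eq_true, if_false]
      omega

private lemma sorted_forall₂' : ∀ {L M : List (Fin n)}, L.Pairwise (· ≤ ·) → M.Pairwise (· ≤ ·) →
    L.length = M.length → (∀ m, M.countP (fun x => x ≤ m) ≤ L.countP (fun x => x ≤ m)) →
    List.Forall₂ (· ≤ ·) L M := by
  intro L
  induction L with
  | nil => intro M _ _ hlen _; rw [List.length_nil] at hlen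
           rw [List.eq_nil_of_length_eq_zero hlen.symm]; exact List.Forall₂.nil
  | cons a L ih =>
    rintro (_ | ⟨b, M⟩) hL hM hlen hcnt
    · simp at hlen
    · have hLs := (List.pairwise_cons.mp hL)
      have hMs := (List.pairwise_cons.mp hM)
      have hab : a ≤ b := by
        have h1 : 0 < (b :: M).countP (fun x => x ≤ b) := by
          apply List.countP_pos_iff.mpr
          exact ⟨b, List.mem_cons_self (a := b) (l := M), by simp⟩
        have h2 := lt_of_lt_of_le h1 (hcnt b)
        obtain ⟨x, hx, hxb⟩ := List.countP_pos_iff.mp h2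
        simp only [decide_eq_true_eq] at hxb
        rcases List.mem_cons.mp hx with rfl | hx'
        · exact hxb
        · exact le_trans (hLs.1 x hx') hxb
      refine List.Forall₂.cons hab (ih hLs.2 hMs.2 (by simpa using hlen) ?_)
      intro m
      have h3 := hcnt m
      simp only [List.countP_cons] at h3
      by_cases hb : b ≤ m
      · have ham : a ≤ m := le_trans hab hb
        simp only [hb, ham, decide_true, if_true] at h3
        omega
      · have h4 : (M.countP fun x => decide (x ≤ m)) = 0 := by
          rw [List.countP_eq_zero]
          intro x hx
          simp only [decide_eq_true_eq]
          intro hxm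
          exact hb (le_trans (hMs.1 x hx) hxm)
        omega

/-- `cnt S m` is the number of elements of `S` that are `≤ m`. -/
private def cnt (S : Finset (Fin n)) (m : Fin n) : ℕ := (S.filter fun x => x ≤ m).card

private lemma countP_sort (S : Finset (Fin n)) (m : Fin n) :
    (S.sort (· ≤ ·)).countP (fun x => x ≤ m) = cnt S m := by
  rw [(S.sort_perm_toList (· ≤ ·)).countP_eq]
  rw [Finset.toList, ← Multiset.coe_countP, Multiset.coe_toList, Multiset.countP_eq_card_filter]
  rfl

private lemma domLE_card {S T : Finset (Fin n)} (h : domLE S T) : S.card = T.card := by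
  have := h.length_eq
  rwa [Finset.length_sort, Finset.length_sort] at this

private lemma domLE_cnt {S T : Finset (Fin n)} (h : domLE S T) (m : Fin n) :
    cnt T m ≤ cnt S m := by
  rw [← countP_sort, ← countP_sort]
  exact forall₂_countP' h m

private lemma domLE_of_cnt {S T : Finset (Fin n)} (hc : S.card = T.card)
    (h : ∀ m, cnt T m ≤ cnt S m) : domLE S T := by
  apply sorted_forall₂' (Finset.pairwise_sort ..) (Finset.pairwise_sort ..)
  · rw [Finset.length_sort, Finset.length_sort, hc]
  · intro m; rw [countP_sort, countP_sort]; exact h m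

private lemma cnt_le_card (S : Finset (Fin n)) (m : Fin n) : cnt S m ≤ S.card :=
  Finset.card_filter_le _ _

private lemma cnt_mono (S : Finset (Fin n)) {m m' : Fin n} (h : m ≤ m') :
    cnt S m ≤ cnt S m' := by
  apply Finset.card_le_card
  intro x hx
  simp only [Finset.mem_filter] at *
  exact ⟨hx.1, le_trans hx.2 h⟩

private lemma cnt_insert {S : Finset (Fin n)} {y : Fin n} (hy : y ∉ S) (m : Fin n) :
    cnt (insert y S) m = cnt S m + if y ≤ m then 1 else 0 := by
  unfold cnt
  rw [Finset.filter_insert]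
  by_cases hym : y ≤ m
  · rw [if_pos hym, if_pos hym,
      Finset.card_insert_of_notMem (fun hc => hy (Finset.mem_filter.mp hc).1)]
  · rw [if_neg hym, if_neg hym, add_zero]

private lemma cnt_erase {S : Finset (Fin n)} {y : Fin n} (hy : y ∈ S) (m : Fin n) :
    cnt (S.erase y) m + (if y ≤ m then 1 else 0) = cnt S m := by
  have h1 : y ∉ S.erase y := Finset.notMem_erase y S
  have h2 : insert y (S.erase y) = S := Finset.insert_erase hy
  conv_rhs => rw [← h2]
  rw [cnt_insert h1 m]

private lemma filter_lt_card {k : ℕ} (hk : k ≤ n) :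
    ((Finset.univ : Finset (Fin n)).filter fun i : Fin n => (i:ℕ) < k).card = k := by
  have : ((Finset.univ : Finset (Fin n)).filter fun i : Fin n => (i:ℕ) < k)
      = Finset.univ.map (Fin.castLEEmb hk) := by
    ext i
    simp [Fin.castLEEmb, Fin.castLE]
    constructor
    · intro h; exact ⟨⟨i, h⟩, rfl⟩
    · rintro ⟨j, rfl⟩; exact j.2
  rw [this]; simp

private lemma initSeg_card (u : Equiv.Perm (Fin n)) {k : ℕ} (hk : k ≤ n) :
    (initSeg u k).card = k := by
  rw [initSeg, Finset.card_image_of_injective _ u.injective, filter_lt_card hk]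

private lemma filter_lt_succ {k : ℕ} (hk : k < n) :
    ((Finset.univ : Finset (Fin n)).filter fun i : Fin n => (i:ℕ) < k + 1)
      = insert ⟨k, hk⟩ ((Finset.univ : Finset (Fin n)).filter fun i : Fin n => (i:ℕ) < k) := by
  ext i
  simp only [Finset.mem_filter, Finset.mem_insert, Finset.mem_univ, true_and]
  constructor
  · intro h
    rcases Nat.lt_succ_iff_lt_or_eq.mp h with h' | h'
    · exact Or.inr h'
    · exact Or.inl (Fin.ext h')
  · rintro (rfl | h)
    · exact Nat.lt_succ_self k
    · exact Nat.lt_succ_of_lt h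

private lemma initSeg_succ (u : Equiv.Perm (Fin n)) {k : ℕ} (hk : k < n) :
    initSeg u (k+1) = insert (u ⟨k, hk⟩) (initSeg u k) := by
  rw [initSeg, filter_lt_succ hk, Finset.image_insert]; rfl

private lemma mk_not_mem_initSeg (u : Equiv.Perm (Fin n)) {k : ℕ} (hk : k < n) :
    u ⟨k, hk⟩ ∉ initSeg u k := by
  simp only [initSeg, Finset.mem_image, Finset.mem_filter, Finset.mem_univ, true_and]
  rintro ⟨i, hi, hiu⟩
  have h2 := u.injective hiu
  subst h2
  exact lt_irrefl _ hi

private lemma cnt_initSeg_succ (w : Equiv.Perm (Fin n)) {k : ℕ} (hk : k < n) (m : Fin n) :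
    cnt (initSeg w (k+1)) m = cnt (initSeg w k) m + if w ⟨k, hk⟩ ≤ m then 1 else 0 := by
  rw [initSeg_succ w hk, cnt_insert (mk_not_mem_initSeg w hk)]

private lemma window_card (X : Finset (Fin n)) (m₁ m₀ : Fin n) (h : m₁ ≤ m₀) :
    (X.filter fun y => m₁ < y ∧ y ≤ m₀).card = cnt X m₀ - cnt X m₁ := by
  have hsub : (X.filter fun x => x ≤ m₁) ⊆ (X.filter fun x => x ≤ m₀) := by
    intro x hx
    simp only [Finset.mem_filter] at *
    exact ⟨hx.1, le_trans hx.2 h⟩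
  have heq : (X.filter fun y => m₁ < y ∧ y ≤ m₀)
      = (X.filter fun x => x ≤ m₀) \ (X.filter fun x => x ≤ m₁) := by
    ext x
    simp only [Finset.mem_filter, Finset.mem_sdiff, not_and, not_le]
    constructor
    · rintro ⟨hx, h1, h2⟩; exact ⟨⟨hx, h2⟩, fun _ => h1⟩
    · rintro ⟨⟨hx, h2⟩, h1⟩; exact ⟨hx, h1 hx, h2⟩
  rw [heq, Finset.card_sdiff_of_subset hsub]
  rfl

private lemma exchange {w : Equiv.Perm (Fin n)} {k : ℕ} (hk : k < n)
    {P S : Finset (Fin n)}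
    (hPc : P.card = k) (hP : ∀ m, cnt (initSeg w k) m ≤ cnt P m)
    (hSc : S.card = k + 1) (hS : ∀ m, cnt (initSeg w (k+1)) m ≤ cnt S m) :
    ∃ y ∈ S, y ∉ P ∧
      (∀ m, cnt (initSeg w (k+1)) m ≤ cnt (insert y P) m) ∧
      (∀ m, cnt (initSeg w k) m ≤ cnt (S.erase y) m) := by
  classical
  set Tk := initSeg w k with hTk
  set Tk1 := initSeg w (k+1) with hTk1
  set wk := w ⟨k, hk⟩ with hwk
  have hstep : ∀ m, cnt Tk1 m = cnt Tk m + if wk ≤ m then 1 else 0 :=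
    cnt_initSeg_succ w hk
  set Tight := (Finset.univ : Finset (Fin n)).filter (fun m => cnt S m ≤ cnt Tk m) with hT
  set Def := (Finset.univ : Finset (Fin n)).filter (fun m => cnt P m < cnt Tk1 m) with hD
  have hTwk : ∀ m ∈ Tight, m < wk := by
    intro m hm
    rw [hT, Finset.mem_filter] at hm
    by_contra hc
    push_neg at hc
    have h1 := hstep m
    rw [if_pos hc] at h1
    have := hS m
    omega
  have hDwk : ∀ m ∈ Def, wk ≤ m := by
    intro m hm
    rw [hD, Finset.mem_filter] at hm
    by_contra hc
    push_neg at hc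
    have h1 := hstep m
    rw [if_neg (not_le.mpr hc)] at h1
    have := hP m
    omega
  set Q : Fin n → Prop := fun y => (∀ m ∈ Tight, m < y) ∧ (∀ m ∈ Def, y ≤ m) with hQ
  have key : (P.filter Q).card < (S.filter Q).card := by
    rcases Finset.eq_empty_or_nonempty Tight with hTe | hTne
    · rcases Finset.eq_empty_or_nonempty Def with hDe | hDne
      · have hall : ∀ X : Finset (Fin n), X.filter Q = X := by
          intro X
          apply Finset.filter_true_of_mem
          intro x _
          constructor
          · intro m hm; rw [hTe] at hm; exact absurd hm (Finset.notMem_empty m)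
          · intro m hm; rw [hDe] at hm; exact absurd hm (Finset.notMem_empty m)
        rw [hall, hall, hPc, hSc]; omega
      · set m₀ := Def.min' hDne with hm₀
        have hQiff : ∀ y, Q y ↔ y ≤ m₀ := by
          intro y
          constructor
          · intro hy; exact hy.2 m₀ (Def.min'_mem hDne)
          · intro hy
            constructor
            · intro m hm; rw [hTe] at hm; exact absurd hm (Finset.notMem_empty m)
            · intro m hm; exact le_trans hy (Def.min'_le m hm)
        have hfe : ∀ X : Finset (Fin n), X.filter Q = X.filter (fun y => y ≤ m₀) := by
          intro X; apply Finset.filter_congr; intro y _; exact hQiff y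
        rw [hfe, hfe]
        have hd : m₀ ∈ Def := Def.min'_mem hDne
        rw [hD, Finset.mem_filter] at hd
        have := hS m₀
        show cnt P m₀ < cnt S m₀
        omega
    · set m₁ := Tight.max' hTne with hm₁
      have hm₁T : m₁ ∈ Tight := Tight.max'_mem hTne
      have hm₁c : cnt S m₁ ≤ cnt Tk m₁ := by
        rw [hT, Finset.mem_filter] at hm₁T; exact hm₁T.2
      have hm₁T' : m₁ ∈ Tight := Tight.max'_mem hTne
      have hm₁P : cnt S m₁ ≤ cnt P m₁ := le_trans hm₁c (hP m₁)
      rcases Finset.eq_empty_or_nonempty Def with hDe | hDne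
      · have hQiff : ∀ y, Q y ↔ m₁ < y := by
          intro y
          constructor
          · intro hy; exact hy.1 m₁ hm₁T'
          · intro hy
            constructor
            · intro m hm; exact lt_of_le_of_lt (Tight.le_max' m hm) hy
            · intro m hm; rw [hDe] at hm; exact absurd hm (Finset.notMem_empty m)
        have hfe : ∀ X : Finset (Fin n), X.filter Q = X.filter (fun y => ¬ y ≤ m₁) := by
          intro X; apply Finset.filter_congr; intro y _
          rw [hQiff y]; exact ⟨fun h => not_le.mpr h, fun h => not_le.mp h⟩
        have hca : ∀ X : Finset (Fin n), (X.filter (fun y => ¬ y ≤ m₁)).card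
            = X.card - cnt X m₁ := by
          intro X
          have := Finset.card_filter_add_card_filter_not
            (s := X) (p := fun y => y ≤ m₁)
          have hrfl : cnt X m₁ = (X.filter fun y => y ≤ m₁).card := rfl
          omega
        rw [hfe, hfe, hca, hca, hPc, hSc]
        have h1 := cnt_le_card S m₁
        have h2 := cnt_le_card P m₁
        omega
      · set m₀ := Def.min' hDne with hm₀
        have hd : m₀ ∈ Def := Def.min'_mem hDne
        have h10 : m₁ < m₀ := lt_of_lt_of_le (hTwk m₁ hm₁T') (hDwk m₀ hd)
        have hQiff : ∀ y, Q y ↔ (m₁ < y ∧ y ≤ m₀) := by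
          intro y
          constructor
          · intro hy; exact ⟨hy.1 m₁ hm₁T', hy.2 m₀ hd⟩
          · rintro ⟨h1, h2⟩
            constructor
            · intro m hm; exact lt_of_le_of_lt (Tight.le_max' m hm) h1
            · intro m hm; exact le_trans h2 (Def.min'_le m hm)
        have hfe : ∀ X : Finset (Fin n), X.filter Q = X.filter (fun y => m₁ < y ∧ y ≤ m₀) := by
          intro X; apply Finset.filter_congr; intro y _; exact hQiff y
        rw [hfe, hfe, window_card P m₁ m₀ (le_of_lt h10), window_card S m₁ m₀ (le_of_lt h10)]
        rw [hD, Finset.mem_filter] at hd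
        have h3 := hS m₀
        have h4 := cnt_mono P (le_of_lt h10)
        have h5 := cnt_mono S (le_of_lt h10)
        omega
  obtain ⟨y, hyS, hyP⟩ : ∃ y ∈ S.filter Q, y ∉ P.filter Q := by
    by_contra hc
    push_neg at hc
    exact absurd (Finset.card_le_card hc) (not_le.mpr key)
  rw [Finset.mem_filter] at hyS
  obtain ⟨hyS, hyQ⟩ := hyS
  have hyP' : y ∉ P := by
    intro hc
    exact hyP (Finset.mem_filter.mpr ⟨hc, hyQ⟩)
  refine ⟨y, hyS, hyP', ?_, ?_⟩
  · intro m
    rw [cnt_insert hyP' m]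
    by_cases hym : y ≤ m
    · rw [if_pos hym]
      have h2 := hstep m
      have h3 := hP m
      split at h2 <;> omega
    · rw [if_neg hym, add_zero]
      by_contra hc
      push_neg at hc
      have hmD : m ∈ Def := by
        rw [hD, Finset.mem_filter]; exact ⟨Finset.mem_univ m, hc⟩
      exact hym (hyQ.2 m hmD)
  · intro m
    have he := cnt_erase hyS m
    by_cases hym : y ≤ m
    · rw [if_pos hym] at he
      have hmT : m ∉ Tight := by
        intro hc
        exact absurd (hyQ.1 m hc) (not_lt.mpr hym)
      rw [hT, Finset.mem_filter] at hmT
      push_neg at hmT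
      have := hmT (Finset.mem_univ m)
      omega
    · rw [if_neg hym, add_zero] at he
      have h1 := hS m
      have h2 := hstep m
      split at h2 <;> omega

private lemma greedy_main {w v vp : Equiv.Perm (Fin n)} (h : GreedyRel w v vp)
    (a : Fin n → ℝ) (ha : ∀ i j : Fin n, i < j → a (v i) < a (v j)) :
    ∀ k : ℕ, k ≤ n →
      (∀ m, cnt (initSeg w k) m ≤ cnt (initSeg vp k) m) ∧
      ∀ S : Finset (Fin n), S.card = k → (∀ m, cnt (initSeg w k) m ≤ cnt S m) →
        ∑ x ∈ initSeg vp k, a x ≤ ∑ x ∈ S, a x := by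
  classical
  obtain ⟨idx, hvp, hgr⟩ := h
  intro k
  induction k with
  | zero =>
    intro _
    have h0 : ∀ u : Equiv.Perm (Fin n), initSeg u 0 = ∅ := by
      intro u; rw [initSeg]; simp
    constructor
    · intro m; rw [h0, h0]
    · intro S hS _
      rw [Finset.card_eq_zero] at hS
      rw [h0, hS]
  | succ k ih =>
    intro hk1
    have hk : k < n := hk1
    obtain ⟨hdomk, hsumk⟩ := ih (le_of_lt hk)
    set dk : Fin n := ⟨k, hk⟩ with hdk
    have hfil : (Finset.univ.filter fun e : Fin n => e < dk)
        = (Finset.univ.filter fun i : Fin n => (i:ℕ) < k) := by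
      apply Finset.filter_congr; intro e _
      simp [Fin.lt_def, hdk]
    have himg : ((Finset.univ.filter fun e : Fin n => e < dk).image fun e => v (idx e))
        = initSeg vp k := by
      rw [hfil, initSeg]
      apply Finset.image_congr
      intro e _
      exact (hvp e).symm
    have hgset : insert (v (idx dk))
        ((Finset.univ.filter fun e : Fin n => e < dk).image fun e => v (idx e))
        = initSeg vp (k+1) := by
      rw [himg, ← hvp dk, initSeg_succ vp hk]
    have hdom1 : domLE (initSeg vp (k+1)) (initSeg w (k+1)) := by
      have hm := (hgr dk).1.2
      rwa [hgset] at hm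
    have hcnts1 : ∀ m, cnt (initSeg w (k+1)) m ≤ cnt (initSeg vp (k+1)) m :=
      fun m => domLE_cnt hdom1 m
    refine ⟨hcnts1, ?_⟩
    intro S hScard hScnt
    have hPcard : (initSeg vp k).card = k := initSeg_card vp (le_of_lt hk)
    obtain ⟨y, hyS, hyP, hins, hers⟩ := exchange hk hPcard hdomk hScard hScnt
    have hvpnot : vp dk ∉ initSeg vp k := mk_not_mem_initSeg vp hk
    have hyScard : (S.erase y).card = k := by rw [Finset.card_erase_of_mem hyS, hScard]; omega
    have hsum2 : ∑ x ∈ initSeg vp k, a x ≤ ∑ x ∈ S.erase y, a x := hsumk _ hyScard hers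
    have hcost : a (vp dk) ≤ a y := by
      set iy := v.symm y with hiy
      have hviy : v iy = y := v.apply_symm_apply y
      have hmemy : (∀ e : Fin n, e < dk → idx e ≠ iy) ∧
          domLE (insert (v iy)
            ((Finset.univ.filter fun e : Fin n => e < dk).image fun e => v (idx e)))
            (initSeg w ((dk : ℕ) + 1)) := by
        constructor
        · intro e he hc
          apply hyP
          have : vp e = y := by rw [hvp e, hc, hviy]
          rw [← this]
          rw [initSeg]
          apply Finset.mem_image_of_mem
          rw [Finset.mem_filter]
          exact ⟨Finset.mem_univ e, he⟩
        · rw [hviy, himg]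
          apply domLE_of_cnt
          · rw [Finset.card_insert_of_notMem hyP, hPcard, initSeg_card w hk1]
          · exact hins
      have hle : idx dk ≤ iy := (hgr dk).2 hmemy
      rw [hvp dk, ← hviy]
      rcases lt_or_eq_of_le hle with hlt | heq
      · exact le_of_lt (ha _ _ hlt)
      · rw [heq]
    calc ∑ x ∈ initSeg vp (k+1), a x
        = a (vp dk) + ∑ x ∈ initSeg vp k, a x := by
          rw [initSeg_succ vp hk, Finset.sum_insert hvpnot]
      _ ≤ a y + ∑ x ∈ S.erase y, a x := add_le_add hcost hsum2
      _ = ∑ x ∈ S, a x := Finset.add_sum_erase S a hyS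

end Aux

/-- If `a ∈ ℝⁿ` satisfies `a_{v(1)} < ⋯ < a_{v(n)}`, then for every `1 ≤ d ≤ n`:
(i) the increasing rearrangement of `{v'(1),…,v'(d)}` is componentwise at most that of
`{w(1),…,w(d)}`; and (ii) for every `d`-element subset `S` whose increasing enumeration is
componentwise at most that of `{w(1),…,w(d)}`, `Σ_{k≤d} a_{v'(k)} ≤ Σ_{s∈S} a_s`. -/
theorem greedy_min_sum {n : ℕ} (w v vp : Equiv.Perm (Fin n)) (h : GreedyRel w v vp)
    (a : Fin n → ℝ) (ha : ∀ i j : Fin n, i < j → a (v i) < a (v j)) :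
    ∀ d : ℕ, 0 < d → d ≤ n →
      domLE (initSeg vp d) (initSeg w d) ∧
      ∀ S : Finset (Fin n), S.card = d → domLE S (initSeg w d) →
        ∑ i ∈ Finset.univ.filter (fun i : Fin n => (i : ℕ) < d), a (vp i) ≤
          ∑ s ∈ S, a s := by
  intro d hd0 hdn
  obtain ⟨hcnts, hsum⟩ := greedy_main h a ha d hdn
  constructor
  · exact domLE_of_cnt (by rw [initSeg_card vp hdn, initSeg_card w hdn]) hcnts
  · intro S hScard hSdom
    have hsum_eq : ∑ x ∈ initSeg vp d, a x
        = ∑ i ∈ Finset.univ.filter (fun i : Fin n => (i:ℕ) < d), a (vp i) := by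
      rw [initSeg]
      exact Finset.sum_image (fun x _ y _ hxy => vp.injective hxy)
    rw [← hsum_eq]
    exact hsum S hScard (fun m => domLE_cnt hSdom m)
end SchubertToric
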